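/- Let (V,μ,ν) be a weighted graph that is uniformly locally finite with constant K := inf_{v∈V} ν(v)/μ(v) > 0. Let p ∈ (1,∞), let q ∈ [p−1,∞), and set s := q/(p−1) (so s ≥ 1). Then there exists a constant C = C(K,p,q) such that for every u ∈ ℓ^q_ν(V): the series defining L_p u(v) converges absolutely for every v ∈ V, L_p u ∈ ℓ^s_ν(V), and ‖L_p u‖_{ℓ^s_ν} ≤ C ‖u‖_{ℓ^q_ν}^{p−1}. Moreover, if in addition p ≥ 2 and ν is nondegenerate (inf_{v∈V} ν(v) > 0), then for every q ∈ [1,∞) there is a constant C' (depending on K, p, q and inf_v ν(v)) such that ‖L_p u‖_{ℓ^q_ν} ≤ C' ‖u‖_{ℓ^q_ν}^{p−1} for all u ∈ ℓ^q_ν(V); in particular L_p maps ℓ^q_ν(V) into ℓ^q_ν(V). -/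

import Mathlib

/-- The `ℓ^q_ν`-norm of a function on the nodes of a weighted graph. -/
noncomputable def lqNorm {V : Type*} (ν : V → ℝ) (q : ℝ) (f : V → ℝ) : ℝ :=
  (∑' v, |f v| ^ q * ν v) ^ (1 / q)

/-- The discrete `p`-Laplacian on a weighted graph (pointwise, via a `tsum`). -/
noncomputable def pLap {V : Type*} (μ : V → V → ℝ) (ν : V → ℝ) (p : ℝ)
    (f : V → ℝ) (v : V) : ℝ :=
  (1 / ν v) * ∑' w, μ v w * |f v - f w| ^ (p - 2) * (f v - f w)

open Real


/-- `t^(p-1) = t^(p-2) * t` for `t ≥ 0`, `p > 1`. -/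
lemma rpow_split (p : ℝ) (hp : 1 < p) {t : ℝ} (ht : 0 ≤ t) :
    t ^ (p - 1) = t ^ (p - 2) * t := by
  rcases eq_or_lt_of_le ht with h0 | h0
  · rw [← h0, Real.zero_rpow (by linarith : p - 1 ≠ 0), mul_zero]
  · have := Real.rpow_add_one (ne_of_gt h0) (p - 2)
    rw [show p - 2 + 1 = p - 1 by ring] at this
    exact this

/-- `|x - y|^q ≤ 2^q * (|x|^q + |y|^q)` for `q ≥ 0`. -/
lemma abs_sub_rpow_le (q : ℝ) (hq : 0 ≤ q) (x y : ℝ) :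
    |x - y| ^ q ≤ 2 ^ q * (|x| ^ q + |y| ^ q) := by
  have h1 : |x - y| ≤ 2 * max |x| |y| := by
    calc |x - y| ≤ |x| + |y| := abs_sub x y
    _ ≤ 2 * max |x| |y| := by
        rcases le_total |x| |y| with h | h
        · rw [max_eq_right h]; linarith
        · rw [max_eq_left h]; linarith
  calc |x - y| ^ q ≤ (2 * max |x| |y|) ^ q :=
        Real.rpow_le_rpow (abs_nonneg _) h1 hq
  _ = 2 ^ q * max |x| |y| ^ q := Real.mul_rpow (by norm_num) (le_max_iff.2 (Or.inl (abs_nonneg x)))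
  _ ≤ 2 ^ q * (|x| ^ q + |y| ^ q) := by
      have : max |x| |y| ^ q ≤ |x| ^ q + |y| ^ q := by
        rcases le_total |x| |y| with h | h
        · rw [max_eq_right h]
          nlinarith [Real.rpow_nonneg (abs_nonneg x) q]
        · rw [max_eq_left h]
          nlinarith [Real.rpow_nonneg (abs_nonneg y) q]
      nlinarith [Real.rpow_nonneg (le_trans (by norm_num) (le_refl (2:ℝ))) q,
        (by positivity : (0:ℝ) ≤ (2:ℝ) ^ q)]

/-- the absolute value of a term in the `p`-Laplacian series. -/
lemma abs_plap_term (p : ℝ) (hp : 1 < p) (m x : ℝ) (hm : 0 ≤ m) :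
    |m * |x| ^ (p - 2) * x| = m * |x| ^ (p - 1) := by
  rw [abs_mul, abs_mul, abs_of_nonneg hm,
    abs_of_nonneg (Real.rpow_nonneg (abs_nonneg x) _),
    rpow_split p hp (abs_nonneg x), mul_assoc]

/-- Jensen-type inequality for weighted tsums. -/
lemma jensen_tsum {V : Type*} (m a : V → ℝ) (hm : ∀ w, 0 ≤ m w)
    (ha : ∀ w, 0 ≤ a w) (hms : Summable m) {s : ℝ} (hs : 1 ≤ s)
    (hsum : Summable (fun w => m w * a w ^ s)) :
    Summable (fun w => m w * a w) ∧
      (∑' w, m w * a w) ^ s ≤ (∑' w, m w) ^ (s - 1) * ∑' w, m w * a w ^ s := by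
  rcases eq_or_lt_of_le hs with h1 | h1
  · have h1' : s = 1 := h1.symm
    subst h1'
    simp only [Real.rpow_one, sub_self, Real.rpow_zero, one_mul]
    exact ⟨hsum.congr fun w => by rw [Real.rpow_one], le_refl _⟩
  · -- s > 1 : Hölder
    have hs0 : s ≠ 0 := by linarith
    have hcj : s.HolderConjugate (s / (s - 1)) := Real.HolderConjugate.conjExponent h1
    have hcj' := hcj.symm
    set t := s / (s - 1) with ht
    have htpos : 0 < t := hcj'.pos
    have ht0 : t ≠ 0 := ne_of_gt htpos
    set f : V → ℝ := fun w => m w ^ (1 / t) with hf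
    set g : V → ℝ := fun w => m w ^ (1 / s) * a w with hg
    have hfnn : ∀ w, 0 ≤ f w := fun w => Real.rpow_nonneg (hm w) _
    have hgnn : ∀ w, 0 ≤ g w := fun w => mul_nonneg (Real.rpow_nonneg (hm w) _) (ha w)
    have hft : ∀ w, f w ^ t = m w := by
      intro w
      rw [hf, one_div, Real.rpow_inv_rpow (hm w) ht0]
    have hgs : ∀ w, g w ^ s = m w * a w ^ s := by
      intro w
      rw [hg, Real.mul_rpow (Real.rpow_nonneg (hm w) _) (ha w), one_div,
        Real.rpow_inv_rpow (hm w) hs0]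
    have hfg : ∀ w, f w * g w = m w * a w := by
      intro w
      rw [hf, hg, ← mul_assoc, ← Real.rpow_add' (hm w) (by
        rw [one_div, one_div, add_comm]
        rw [hcj.inv_add_inv_eq_one]; norm_num)]
      rw [one_div, one_div, add_comm, hcj.inv_add_inv_eq_one, Real.rpow_one]
    have hfsum : Summable fun w => f w ^ t := hms.congr fun w => (hft w).symm
    have hgsum : Summable fun w => g w ^ s := hsum.congr fun w => (hgs w).symm
    obtain ⟨hS, hIle⟩ := summable_and_inner_le_Lp_mul_Lq_tsum_of_nonneg hcj' hfnn hgnn hfsum hgsum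
    refine ⟨hS.congr hfg, ?_⟩
    have h2 : ∑' w, m w * a w ≤ (∑' w, m w) ^ (1 / t) * (∑' w, m w * a w ^ s) ^ (1 / s) := by
      calc ∑' w, m w * a w = ∑' w, f w * g w := (tsum_congr hfg).symm
      _ ≤ (∑' w, f w ^ t) ^ (1 / t) * (∑' w, g w ^ s) ^ (1 / s) := hIle
      _ = (∑' w, m w) ^ (1 / t) * (∑' w, m w * a w ^ s) ^ (1 / s) := by
          rw [tsum_congr hft, tsum_congr hgs]
    have hMnn : 0 ≤ ∑' w, m w := tsum_nonneg hm
    have hGnn : 0 ≤ ∑' w, m w * a w ^ s :=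
      tsum_nonneg fun w => mul_nonneg (hm w) (Real.rpow_nonneg (ha w) _)
    have hLnn : 0 ≤ ∑' w, m w * a w := tsum_nonneg fun w => mul_nonneg (hm w) (ha w)
    calc (∑' w, m w * a w) ^ s
        ≤ ((∑' w, m w) ^ (1 / t) * (∑' w, m w * a w ^ s) ^ (1 / s)) ^ s :=
          Real.rpow_le_rpow hLnn h2 (by linarith)
    _ = (∑' w, m w) ^ (s - 1) * ∑' w, m w * a w ^ s := by
        rw [Real.mul_rpow (Real.rpow_nonneg hMnn _) (Real.rpow_nonneg hGnn _),
          ← Real.rpow_mul hMnn, ← Real.rpow_mul hGnn, one_div_mul_cancel hs0,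
          Real.rpow_one]
        congr 1
        rw [ht]
        field_simp

/-- Tonelli-type bound for symmetric kernels. -/
lemma swap_tsum {V : Type*} (m : V → V → ℝ) (hm : ∀ v w, 0 ≤ m v w)
    (hsymm : ∀ v w, m v w = m w v) (hloc : ∀ v, Summable (m v))
    (c g : V → ℝ) (hc : ∀ w, 0 ≤ c w) (hg : ∀ w, 0 ≤ g w) (hgs : Summable g)
    (hbound : ∀ w, (∑' x, m w x) * c w ≤ g w)
    (hrow : ∀ v, Summable (fun w => m v w * c w)) :
    Summable (fun v => ∑' w, m v w * c w) ∧
      ∑' v, ∑' w, m v w * c w ≤ ∑' w, g w := by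
  have hrownn : ∀ v, 0 ≤ ∑' w, m v w * c w :=
    fun v => tsum_nonneg fun w => mul_nonneg (hm v w) (hc w)
  -- pass to ℝ≥0∞
  have key : ∑' v, ENNReal.ofReal (∑' w, m v w * c w) ≤ ENNReal.ofReal (∑' w, g w) := by
    have e1 : ∀ v, ENNReal.ofReal (∑' w, m v w * c w)
        = ∑' w, ENNReal.ofReal (m v w * c w) := fun v =>
      ENNReal.ofReal_tsum_of_nonneg (fun w => mul_nonneg (hm v w) (hc w)) (hrow v)
    calc ∑' v, ENNReal.ofReal (∑' w, m v w * c w)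
        = ∑' (v) (w), ENNReal.ofReal (m v w * c w) := tsum_congr e1
    _ = ∑' (w) (v), ENNReal.ofReal (m v w * c w) := ENNReal.tsum_comm
    _ = ∑' w, ENNReal.ofReal (∑' v, m v w * c w) := by
        refine tsum_congr fun w => ?_
        rw [ENNReal.ofReal_tsum_of_nonneg (fun v => mul_nonneg (hm v w) (hc w))
          (((hloc w).mul_right (c w)).congr fun v => by rw [hsymm w v])]
    _ ≤ ∑' w, ENNReal.ofReal (g w) := by
        refine ENNReal.tsum_le_tsum fun w => ENNReal.ofReal_le_ofReal ?_
        calc ∑' v, m v w * c w = (∑' v, m w v) * c w := by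
              rw [← tsum_mul_right]
              exact tsum_congr fun v => by rw [hsymm v w]
        _ ≤ g w := hbound w
    _ = ENNReal.ofReal (∑' w, g w) := (ENNReal.ofReal_tsum_of_nonneg hg hgs).symm
  have hne : ∑' v, ENNReal.ofReal (∑' w, m v w * c w) ≠ ⊤ :=
    lt_of_le_of_lt key ENNReal.ofReal_lt_top |>.ne
  have hsummable : Summable (fun v => ∑' w, m v w * c w) := by
    have := ENNReal.summable_toReal hne
    exact this.congr fun v => ENNReal.toReal_ofReal (hrownn v)
  refine ⟨hsummable, ?_⟩
  have e2 : ∑' v, ∑' w, m v w * c w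
      = (∑' v, ENNReal.ofReal (∑' w, m v w * c w)).toReal := by
    rw [ENNReal.tsum_toReal_eq (fun v => ENNReal.ofReal_ne_top)]
    exact (tsum_congr fun v => (ENNReal.toReal_ofReal (hrownn v)).symm)
  rw [e2]
  calc (∑' v, ENNReal.ofReal (∑' w, m v w * c w)).toReal
      ≤ (ENNReal.ofReal (∑' w, g w)).toReal := ENNReal.toReal_mono ENNReal.ofReal_ne_top key
  _ = ∑' w, g w := ENNReal.toReal_ofReal (tsum_nonneg hg)
/-- Master estimate. -/
lemma master_est {V : Type*} (μ : V → V → ℝ) (ν : V → ℝ)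
    (hμsymm : ∀ v w, μ v w = μ w v) (hμnn : ∀ v w, 0 ≤ μ v w)
    (hν : ∀ v, 0 < ν v) (hloc : ∀ v, Summable (fun w => μ v w))
    (K : ℝ) (hK : 0 < K) (hulf : ∀ v, K * ∑' w, μ v w ≤ ν v)
    (q s : ℝ) (hq : 0 < q) (hs : 1 ≤ s)
    (u : V → ℝ) (hu : Summable (fun v => |u v| ^ q * ν v))
    (a : V → V → ℝ) (ha : ∀ v w, 0 ≤ a v w)
    (has : ∀ v w, a v w ^ s = |u v - u w| ^ q) :
    (∀ v, Summable (fun w => μ v w * a v w)) ∧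
    Summable (fun v => ((1 / ν v) * ∑' w, μ v w * a v w) ^ s * ν v) ∧
    ∑' v, ((1 / ν v) * ∑' w, μ v w * a v w) ^ s * ν v
      ≤ 2 ^ (q + 1) * K ^ (-s) * ∑' v, |u v| ^ q * ν v := by
  have hMnn : ∀ v, (0:ℝ) ≤ ∑' w, μ v w := fun v => tsum_nonneg (hμnn v)
  have hMν : ∀ v, ∑' w, μ v w ≤ ν v / K := fun v =>
    (le_div_iff₀' hK).2 (hulf v)
  have hμle : ∀ v w, μ v w ≤ ν w / K := by
    intro v w
    calc μ v w = μ w v := hμsymm v w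
    _ ≤ ∑' x, μ w x := Summable.le_tsum (hloc w) v (fun j _ => hμnn w j)
    _ ≤ ν w / K := hMν w
  -- summability of rows against |u|^q
  have hsum_c : ∀ v, Summable (fun w => μ v w * |u w| ^ q) := by
    intro v
    refine Summable.of_nonneg_of_le
      (fun w => mul_nonneg (hμnn v w) (Real.rpow_nonneg (abs_nonneg _) q))
      (fun w => ?_) (hu.mul_right K⁻¹)
    calc μ v w * |u w| ^ q ≤ ν w / K * |u w| ^ q := by
          exact mul_le_mul_of_nonneg_right (hμle v w) (Real.rpow_nonneg (abs_nonneg _) q)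
    _ = |u w| ^ q * ν w * K⁻¹ := by rw [div_eq_mul_inv]; ring
  -- summability of rows against |u v - u w|^q
  have hsum_b : ∀ v, Summable (fun w => μ v w * |u v - u w| ^ q) := by
    intro v
    refine Summable.of_nonneg_of_le
      (fun w => mul_nonneg (hμnn v w) (Real.rpow_nonneg (abs_nonneg _) q))
      (fun w => ?_)
      ((((hloc v).mul_left (|u v| ^ q)).add (hsum_c v)).mul_left ((2:ℝ) ^ q))
    calc μ v w * |u v - u w| ^ q
        ≤ μ v w * (2 ^ q * (|u v| ^ q + |u w| ^ q)) :=
          mul_le_mul_of_nonneg_left (abs_sub_rpow_le q hq.le _ _) (hμnn v w)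
    _ = 2 ^ q * (|u v| ^ q * μ v w + μ v w * |u w| ^ q) := by ring
  -- Jensen per row
  have hjen := fun v => jensen_tsum (μ v) (a v) (hμnn v) (ha v) (hloc v) hs
    ((hsum_b v).congr (fun w => by rw [← has v w]))
  have hA : ∀ v, Summable (fun w => μ v w * a v w) := fun v => (hjen v).1
  set B : V → ℝ := fun v => ∑' w, μ v w * |u v - u w| ^ q with hB
  have hBnn : ∀ v, 0 ≤ B v :=
    fun v => tsum_nonneg fun w => mul_nonneg (hμnn v w) (Real.rpow_nonneg (abs_nonneg _) q)
  have hjen2 : ∀ v, (∑' w, μ v w * a v w) ^ s ≤ (∑' w, μ v w) ^ (s - 1) * B v := by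
    intro v
    have := (hjen v).2
    rwa [tsum_congr (fun w => by rw [has v w] :
      ∀ w, μ v w * a v w ^ s = μ v w * |u v - u w| ^ q)] at this
  -- pointwise estimate
  have hpt : ∀ v, ((1 / ν v) * ∑' w, μ v w * a v w) ^ s * ν v ≤ K ^ (1 - s) * B v := by
    intro v
    have hνv := hν v
    have hAnn : 0 ≤ ∑' w, μ v w * a v w :=
      tsum_nonneg fun w => mul_nonneg (hμnn v w) (ha v w)
    have key : (1 / ν v) ^ s * (ν v / K) ^ (s - 1) * ν v = K ^ (1 - s) := by
      have h1 : (1 / ν v) ^ s = ν v ^ (-s) := by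
        rw [one_div, Real.inv_rpow hνv.le, ← Real.rpow_neg hνv.le]
      have h2 : (ν v / K) ^ (s - 1) = ν v ^ (s - 1) * K ^ (1 - s) := by
        rw [Real.div_rpow hνv.le hK.le, div_eq_mul_inv, ← Real.rpow_neg hK.le, neg_sub]
      have h3 : ν v ^ (-s) * ν v ^ (s - 1) * ν v = 1 := by
        rw [← Real.rpow_add hνv, ← Real.rpow_add_one hνv.ne',
          show -s + (s - 1) + 1 = 0 by ring, Real.rpow_zero]
      calc (1 / ν v) ^ s * (ν v / K) ^ (s - 1) * ν v
          = (ν v ^ (-s) * ν v ^ (s - 1) * ν v) * K ^ (1 - s) := by rw [h1, h2]; ring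
      _ = K ^ (1 - s) := by rw [h3, one_mul]
    have step1 : ((1 / ν v) * ∑' w, μ v w * a v w) ^ s
        = (1 / ν v) ^ s * (∑' w, μ v w * a v w) ^ s :=
      Real.mul_rpow (by positivity) hAnn
    have step2 : (∑' w, μ v w * a v w) ^ s ≤ (ν v / K) ^ (s - 1) * B v := by
      refine le_trans (hjen2 v) (mul_le_mul_of_nonneg_right ?_ (hBnn v))
      exact Real.rpow_le_rpow (hMnn v) (hMν v) (by linarith)
    calc ((1 / ν v) * ∑' w, μ v w * a v w) ^ s * ν v
        = (1 / ν v) ^ s * (∑' w, μ v w * a v w) ^ s * ν v := by rw [step1]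
    _ ≤ (1 / ν v) ^ s * ((ν v / K) ^ (s - 1) * B v) * ν v := by
        refine mul_le_mul_of_nonneg_right (mul_le_mul_of_nonneg_left step2 ?_) hνv.le
        positivity
    _ = (1 / ν v) ^ s * (ν v / K) ^ (s - 1) * ν v * B v := by ring
    _ = K ^ (1 - s) * B v := by rw [key]
  -- sum of B
  have hsum1 : Summable (fun v => |u v| ^ q * (∑' w, μ v w)) := by
    refine Summable.of_nonneg_of_le
      (fun v => mul_nonneg (Real.rpow_nonneg (abs_nonneg _) q) (hMnn v))
      (fun v => ?_) (hu.mul_right K⁻¹)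
    calc |u v| ^ q * (∑' w, μ v w) ≤ |u v| ^ q * (ν v / K) :=
          mul_le_mul_of_nonneg_left (hMν v) (Real.rpow_nonneg (abs_nonneg _) q)
    _ = |u v| ^ q * ν v * K⁻¹ := by rw [div_eq_mul_inv]; ring
  have hsum1' : ∑' v, |u v| ^ q * (∑' w, μ v w) ≤ (∑' v, |u v| ^ q * ν v) * K⁻¹ := by
    rw [← tsum_mul_right]
    refine Summable.tsum_le_tsum (fun v => ?_) hsum1 (hu.mul_right K⁻¹)
    calc |u v| ^ q * (∑' w, μ v w) ≤ |u v| ^ q * (ν v / K) :=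
          mul_le_mul_of_nonneg_left (hMν v) (Real.rpow_nonneg (abs_nonneg _) q)
    _ = |u v| ^ q * ν v * K⁻¹ := by rw [div_eq_mul_inv]; ring
  obtain ⟨hCsum, hCle⟩ := swap_tsum μ hμnn hμsymm hloc (fun w => |u w| ^ q)
    (fun w => |u w| ^ q * ν w * K⁻¹)
    (fun w => Real.rpow_nonneg (abs_nonneg _) q)
    (fun w => mul_nonneg (mul_nonneg (Real.rpow_nonneg (abs_nonneg _) q) (hν w).le)
      (inv_nonneg.2 hK.le)) (hu.mul_right K⁻¹)
    (fun w => by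
      calc (∑' x, μ w x) * |u w| ^ q ≤ (ν w / K) * |u w| ^ q :=
            mul_le_mul_of_nonneg_right (hMν w) (Real.rpow_nonneg (abs_nonneg _) q)
      _ = |u w| ^ q * ν w * K⁻¹ := by rw [div_eq_mul_inv]; ring)
    hsum_c
  have hCle' : ∑' v, ∑' w, μ v w * |u w| ^ q ≤ (∑' v, |u v| ^ q * ν v) * K⁻¹ := by
    refine le_trans hCle (le_of_eq ?_)
    rw [← tsum_mul_right]
  -- bound B v by a summable function
  have hBle : ∀ v, B v ≤ 2 ^ q * (|u v| ^ q * (∑' w, μ v w)) + 2 ^ q * ∑' w, μ v w * |u w| ^ q := by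
    intro v
    have hrhs : Summable (fun w => 2 ^ q * (|u v| ^ q * μ v w) + 2 ^ q * (μ v w * |u w| ^ q)) :=
      (((hloc v).mul_left (|u v| ^ q)).mul_left ((2:ℝ) ^ q)).add
        ((hsum_c v).mul_left ((2:ℝ) ^ q))
    calc B v ≤ ∑' w, (2 ^ q * (|u v| ^ q * μ v w) + 2 ^ q * (μ v w * |u w| ^ q)) := by
          refine Summable.tsum_le_tsum (fun w => ?_) (hsum_b v) hrhs
          calc μ v w * |u v - u w| ^ q
              ≤ μ v w * (2 ^ q * (|u v| ^ q + |u w| ^ q)) :=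
                mul_le_mul_of_nonneg_left (abs_sub_rpow_le q hq.le _ _) (hμnn v w)
          _ = 2 ^ q * (|u v| ^ q * μ v w) + 2 ^ q * (μ v w * |u w| ^ q) := by ring
    _ = 2 ^ q * (|u v| ^ q * (∑' w, μ v w)) + 2 ^ q * ∑' w, μ v w * |u w| ^ q := by
        rw [Summable.tsum_add (((hloc v).mul_left (|u v| ^ q)).mul_left ((2:ℝ) ^ q))
          ((hsum_c v).mul_left ((2:ℝ) ^ q)), tsum_mul_left, tsum_mul_left, tsum_mul_left]
  have hBsummable : Summable B :=
    Summable.of_nonneg_of_le hBnn hBle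
      ((hsum1.mul_left ((2:ℝ) ^ q)).add (hCsum.mul_left ((2:ℝ) ^ q)))
  have hBsum : ∑' v, B v ≤ 2 ^ q * ((∑' v, |u v| ^ q * ν v) * K⁻¹)
      + 2 ^ q * ((∑' v, |u v| ^ q * ν v) * K⁻¹) := by
    calc ∑' v, B v
        ≤ ∑' v, (2 ^ q * (|u v| ^ q * (∑' w, μ v w)) + 2 ^ q * ∑' w, μ v w * |u w| ^ q) :=
          Summable.tsum_le_tsum hBle hBsummable
            ((hsum1.mul_left ((2:ℝ) ^ q)).add (hCsum.mul_left ((2:ℝ) ^ q)))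
    _ = 2 ^ q * (∑' v, |u v| ^ q * (∑' w, μ v w)) + 2 ^ q * ∑' v, ∑' w, μ v w * |u w| ^ q := by
        rw [Summable.tsum_add (hsum1.mul_left ((2:ℝ) ^ q)) (hCsum.mul_left ((2:ℝ) ^ q)),
          tsum_mul_left, tsum_mul_left]
    _ ≤ 2 ^ q * ((∑' v, |u v| ^ q * ν v) * K⁻¹) + 2 ^ q * ((∑' v, |u v| ^ q * ν v) * K⁻¹) := by
        have h2q : (0:ℝ) ≤ 2 ^ q := by positivity
        exact add_le_add (mul_le_mul_of_nonneg_left hsum1' h2q)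
          (mul_le_mul_of_nonneg_left hCle' h2q)
  -- conclusion
  have hPnn : ∀ v, 0 ≤ ((1 / ν v) * ∑' w, μ v w * a v w) ^ s * ν v := by
    intro v
    have hAnn : 0 ≤ ∑' w, μ v w * a v w :=
      tsum_nonneg fun w => mul_nonneg (hμnn v w) (ha v w)
    exact mul_nonneg (Real.rpow_nonneg
      (mul_nonneg (one_div_nonneg.2 (hν v).le) hAnn) s) (hν v).le
  have hK1s : (0:ℝ) ≤ K ^ (1 - s) := (Real.rpow_pos_of_pos hK _).le
  have hPsummable : Summable (fun v => ((1 / ν v) * ∑' w, μ v w * a v w) ^ s * ν v) :=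
    Summable.of_nonneg_of_le hPnn hpt (hBsummable.mul_left _)
  refine ⟨hA, hPsummable, ?_⟩
  calc ∑' v, ((1 / ν v) * ∑' w, μ v w * a v w) ^ s * ν v
      ≤ ∑' v, K ^ (1 - s) * B v := Summable.tsum_le_tsum hpt hPsummable (hBsummable.mul_left _)
  _ = K ^ (1 - s) * ∑' v, B v := tsum_mul_left
  _ ≤ K ^ (1 - s) * (2 ^ q * ((∑' v, |u v| ^ q * ν v) * K⁻¹)
      + 2 ^ q * ((∑' v, |u v| ^ q * ν v) * K⁻¹)) := mul_le_mul_of_nonneg_left hBsum hK1s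
  _ = 2 ^ (q + 1) * K ^ (-s) * ∑' v, |u v| ^ q * ν v := by
      rw [Real.rpow_add_one (by norm_num : (2:ℝ) ≠ 0) q,
        show K ^ (1 - s) = K ^ (-s) * K by
          rw [← Real.rpow_add_one hK.ne' (-s)]; ring_nf]
      field_simp
      ring

/-- mapping properties of the discrete `p`-Laplacian.
Let `(V,μ,ν)` be uniformly locally finite with constant `K > 0` and `p ∈ (1,∞)`.
For `q ∈ [p−1,∞)` and `s := q/(p−1)` there is `C = C(K,p,q)` such that for every
`u ∈ ℓ^q_ν` the defining series of `L_p u` converge absolutely, `L_p u ∈ ℓ^s_ν` and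
`‖L_p u‖_{ℓ^s_ν} ≤ C ‖u‖_{ℓ^q_ν}^{p−1}`. Moreover, if `p ≥ 2` and `ν` is
nondegenerate, then for every `q ∈ [1,∞)` there is `C'` with
`‖L_p u‖_{ℓ^q_ν} ≤ C' ‖u‖_{ℓ^q_ν}^{p−1}` for every `u ∈ ℓ^q_ν`; in particular `L_p`
maps `ℓ^q_ν` into itself. -/
theorem stmt13 {V : Type*} [Countable V]
    (μ : V → V → ℝ) (ν : V → ℝ)
    (hμsymm : ∀ v w, μ v w = μ w v) (hμnn : ∀ v w, 0 ≤ μ v w) (hμdiag : ∀ v, μ v v = 0)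
    (hν : ∀ v, 0 < ν v) (hloc : ∀ v, Summable (fun w => μ v w))
    (K : ℝ) (hK : 0 < K) (hulf : ∀ v, K * ∑' w, μ v w ≤ ν v)
    (p : ℝ) (hp : 1 < p) :
    (∀ q : ℝ, p - 1 ≤ q → ∃ C : ℝ, ∀ u : V → ℝ,
      Summable (fun v => |u v| ^ q * ν v) →
        (∀ v, Summable (fun w => μ v w * |u v - u w| ^ (p - 1))) ∧
        Summable (fun v => |pLap μ ν p u v| ^ (q / (p - 1)) * ν v) ∧
        lqNorm ν (q / (p - 1)) (pLap μ ν p u) ≤ C * lqNorm ν q u ^ (p - 1)) ∧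
    (2 ≤ p → (∃ ε : ℝ, 0 < ε ∧ ∀ v, ε ≤ ν v) →
      ∀ q : ℝ, 1 ≤ q → ∃ C' : ℝ, ∀ u : V → ℝ,
        Summable (fun v => |u v| ^ q * ν v) →
          Summable (fun v => |pLap μ ν p u v| ^ q * ν v) ∧
          lqNorm ν q (pLap μ ν p u) ≤ C' * lqNorm ν q u ^ (p - 1)) := by
  have hp1 : 0 < p - 1 := by linarith
  constructor
  · -- Part 1
    intro q hq'
    have hq0 : 0 < q := lt_of_lt_of_le hp1 hq'
    set s : ℝ := q / (p - 1) with hsdef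
    have hs1 : 1 ≤ s := (one_le_div hp1).2 hq'
    have hs0 : 0 < s := lt_of_lt_of_le one_pos hs1
    refine ⟨(2 ^ (q + 1) * K ^ (-s)) ^ (1 / s), fun u hu => ?_⟩
    obtain ⟨hA, hPsum, hPle⟩ := master_est μ ν hμsymm hμnn hν hloc K hK hulf q s hq0 hs1 u hu
      (fun v w => |u v - u w| ^ (p - 1))
      (fun v w => Real.rpow_nonneg (abs_nonneg _) _)
      (fun v w => by
        rw [← Real.rpow_mul (abs_nonneg _)]
        congr 1
        rw [hsdef]
        field_simp)
    have hgnn : ∀ v, (0:ℝ) ≤ (1 / ν v) * ∑' w, μ v w * |u v - u w| ^ (p - 1) :=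
      fun v => mul_nonneg (one_div_nonneg.2 (hν v).le)
        (tsum_nonneg fun w => mul_nonneg (hμnn v w) (Real.rpow_nonneg (abs_nonneg _) _))
    have hpl : ∀ v, |pLap μ ν p u v| ≤ (1 / ν v) * ∑' w, μ v w * |u v - u w| ^ (p - 1) := by
      intro v
      rw [pLap, abs_mul, abs_of_nonneg (one_div_nonneg.2 (hν v).le)]
      refine mul_le_mul_of_nonneg_left ?_ (one_div_nonneg.2 (hν v).le)
      have hnorm : Summable (fun w => ‖μ v w * |u v - u w| ^ (p - 2) * (u v - u w)‖) :=
        (hA v).congr fun w => by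
          rw [Real.norm_eq_abs, abs_plap_term p hp _ _ (hμnn v w)]
      calc |∑' w, μ v w * |u v - u w| ^ (p - 2) * (u v - u w)|
          ≤ ∑' w, ‖μ v w * |u v - u w| ^ (p - 2) * (u v - u w)‖ := by
            rw [← Real.norm_eq_abs]
            exact norm_tsum_le_tsum_norm hnorm
      _ = ∑' w, μ v w * |u v - u w| ^ (p - 1) :=
            tsum_congr fun w => by
              rw [Real.norm_eq_abs, abs_plap_term p hp _ _ (hμnn v w)]
    have hcmp : ∀ v, |pLap μ ν p u v| ^ s * ν v
        ≤ ((1 / ν v) * ∑' w, μ v w * |u v - u w| ^ (p - 1)) ^ s * ν v :=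
      fun v => mul_le_mul_of_nonneg_right
        (Real.rpow_le_rpow (abs_nonneg _) (hpl v) hs0.le) (hν v).le
    have hplnn : ∀ v, (0:ℝ) ≤ |pLap μ ν p u v| ^ s * ν v :=
      fun v => mul_nonneg (Real.rpow_nonneg (abs_nonneg _) _) (hν v).le
    have hTsum : Summable (fun v => |pLap μ ν p u v| ^ s * ν v) :=
      Summable.of_nonneg_of_le hplnn hcmp hPsum
    refine ⟨hA, hTsum, ?_⟩
    have hSnn : (0:ℝ) ≤ ∑' v, |u v| ^ q * ν v :=
      tsum_nonneg fun v => mul_nonneg (Real.rpow_nonneg (abs_nonneg _) _) (hν v).le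
    have hTnn : (0:ℝ) ≤ ∑' v, |pLap μ ν p u v| ^ s * ν v := tsum_nonneg hplnn
    have hTle : ∑' v, |pLap μ ν p u v| ^ s * ν v
        ≤ 2 ^ (q + 1) * K ^ (-s) * ∑' v, |u v| ^ q * ν v :=
      le_trans (Summable.tsum_le_tsum hcmp hTsum hPsum) hPle
    have hDnn : (0:ℝ) ≤ 2 ^ (q + 1) * K ^ (-s) := by positivity
    rw [lqNorm, lqNorm]
    calc (∑' v, |pLap μ ν p u v| ^ s * ν v) ^ (1 / s)
        ≤ (2 ^ (q + 1) * K ^ (-s) * ∑' v, |u v| ^ q * ν v) ^ (1 / s) :=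
          Real.rpow_le_rpow hTnn hTle (by positivity)
    _ = (2 ^ (q + 1) * K ^ (-s)) ^ (1 / s) * ((∑' v, |u v| ^ q * ν v) ^ (1 / q)) ^ (p - 1) := by
        rw [Real.mul_rpow hDnn hSnn, ← Real.rpow_mul hSnn]
        congr 1
        rw [hsdef, one_div_div]
        ring
  · -- Part 2
    intro hp2 ⟨ε, hε, hεν⟩ q hq1
    have hq0 : 0 < q := lt_of_lt_of_le one_pos hq1
    have hp20 : (0:ℝ) ≤ p - 2 := by linarith
    refine ⟨2 ^ (p - 2) * ε ^ (-((p - 2) / q)) * (2 ^ (q + 1) * K ^ (-q)) ^ (1 / q),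
      fun u hu => ?_⟩
    set S : ℝ := ∑' v, |u v| ^ q * ν v with hSdef
    have hSnn : (0:ℝ) ≤ S :=
      tsum_nonneg fun v => mul_nonneg (Real.rpow_nonneg (abs_nonneg _) _) (hν v).le
    set W : ℝ := S ^ (1 / q) with hWdef
    have hWnn : (0:ℝ) ≤ W := Real.rpow_nonneg hSnn _
    set M : ℝ := W * ε ^ (-(1 / q)) with hMdef
    have hMnn : (0:ℝ) ≤ M := mul_nonneg hWnn (Real.rpow_nonneg hε.le _)
    have hub : ∀ v, |u v| ≤ M := by
      intro v
      have h1 : |u v| ^ q ≤ S / ε := by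
        rw [le_div_iff₀ hε]
        calc |u v| ^ q * ε ≤ |u v| ^ q * ν v :=
              mul_le_mul_of_nonneg_left (hεν v) (Real.rpow_nonneg (abs_nonneg _) _)
        _ ≤ S := Summable.le_tsum hu v fun j _ =>
              mul_nonneg (Real.rpow_nonneg (abs_nonneg _) _) (hν j).le
      calc |u v| = (|u v| ^ q) ^ (1 / q) := by
            rw [one_div, Real.rpow_rpow_inv (abs_nonneg _) hq0.ne']
      _ ≤ (S / ε) ^ (1 / q) :=
            Real.rpow_le_rpow (Real.rpow_nonneg (abs_nonneg _) _) h1 (by positivity)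
      _ = M := by
            rw [hMdef, hWdef, Real.div_rpow hSnn hε.le, div_eq_mul_inv,
              ← Real.rpow_neg hε.le]
    obtain ⟨hA, hPsum, hPle⟩ := master_est μ ν hμsymm hμnn hν hloc K hK hulf q q hq0 hq1 u hu
      (fun v w => |u v - u w|) (fun v w => abs_nonneg _) (fun v w => rfl)
    set c : ℝ := (2 * M) ^ (p - 2) with hcdef
    have hcnn : (0:ℝ) ≤ c := Real.rpow_nonneg (by linarith) _
    have hFle : ∀ v w, |μ v w * |u v - u w| ^ (p - 2) * (u v - u w)|
        ≤ c * (μ v w * |u v - u w|) := by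
      intro v w
      rw [abs_plap_term p hp _ _ (hμnn v w)]
      have hx2M : |u v - u w| ≤ 2 * M := by
        calc |u v - u w| ≤ |u v| + |u w| := abs_sub _ _
        _ ≤ M + M := add_le_add (hub v) (hub w)
        _ = 2 * M := by ring
      have h4 : |u v - u w| ^ (p - 2) ≤ c :=
        Real.rpow_le_rpow (abs_nonneg _) hx2M hp20
      calc μ v w * |u v - u w| ^ (p - 1)
          = μ v w * (|u v - u w| ^ (p - 2) * |u v - u w|) := by
            rw [rpow_split p hp (abs_nonneg _)]
      _ ≤ μ v w * (c * |u v - u w|) :=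
            mul_le_mul_of_nonneg_left
              (mul_le_mul_of_nonneg_right h4 (abs_nonneg _)) (hμnn v w)
      _ = c * (μ v w * |u v - u w|) := by ring
    have hgnn : ∀ v, (0:ℝ) ≤ (1 / ν v) * ∑' w, μ v w * |u v - u w| :=
      fun v => mul_nonneg (one_div_nonneg.2 (hν v).le)
        (tsum_nonneg fun w => mul_nonneg (hμnn v w) (abs_nonneg _))
    have hpl : ∀ v, |pLap μ ν p u v| ≤ c * ((1 / ν v) * ∑' w, μ v w * |u v - u w|) := by
      intro v
      rw [pLap, abs_mul, abs_of_nonneg (one_div_nonneg.2 (hν v).le)]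
      have hnorm : Summable (fun w => ‖μ v w * |u v - u w| ^ (p - 2) * (u v - u w)‖) :=
        Summable.of_nonneg_of_le (fun w => norm_nonneg _)
          (fun w => by rw [Real.norm_eq_abs]; exact hFle v w) ((hA v).mul_left c)
      calc (1 / ν v) * |∑' w, μ v w * |u v - u w| ^ (p - 2) * (u v - u w)|
          ≤ (1 / ν v) * ∑' w, ‖μ v w * |u v - u w| ^ (p - 2) * (u v - u w)‖ := by
            refine mul_le_mul_of_nonneg_left ?_ (one_div_nonneg.2 (hν v).le)
            rw [← Real.norm_eq_abs]
            exact norm_tsum_le_tsum_norm hnorm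
      _ ≤ (1 / ν v) * ∑' w, c * (μ v w * |u v - u w|) := by
            refine mul_le_mul_of_nonneg_left ?_ (one_div_nonneg.2 (hν v).le)
            exact Summable.tsum_le_tsum (fun w => by
              rw [Real.norm_eq_abs]; exact hFle v w) hnorm ((hA v).mul_left c)
      _ = c * ((1 / ν v) * ∑' w, μ v w * |u v - u w|) := by
            rw [tsum_mul_left]; ring
    have hcmp : ∀ v, |pLap μ ν p u v| ^ q * ν v
        ≤ c ^ q * (((1 / ν v) * ∑' w, μ v w * |u v - u w|) ^ q * ν v) := by
      intro v
      have := Real.rpow_le_rpow (abs_nonneg _) (hpl v) hq0.le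
      rw [Real.mul_rpow hcnn (hgnn v)] at this
      calc |pLap μ ν p u v| ^ q * ν v
          ≤ c ^ q * ((1 / ν v) * ∑' w, μ v w * |u v - u w|) ^ q * ν v :=
            mul_le_mul_of_nonneg_right this (hν v).le
      _ = c ^ q * (((1 / ν v) * ∑' w, μ v w * |u v - u w|) ^ q * ν v) := by ring
    have hplnn : ∀ v, (0:ℝ) ≤ |pLap μ ν p u v| ^ q * ν v :=
      fun v => mul_nonneg (Real.rpow_nonneg (abs_nonneg _) _) (hν v).le
    have hTsum : Summable (fun v => |pLap μ ν p u v| ^ q * ν v) :=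
      Summable.of_nonneg_of_le hplnn hcmp (hPsum.mul_left _)
    refine ⟨hTsum, ?_⟩
    have hTnn : (0:ℝ) ≤ ∑' v, |pLap μ ν p u v| ^ q * ν v := tsum_nonneg hplnn
    have hDnn : (0:ℝ) ≤ 2 ^ (q + 1) * K ^ (-q) := by positivity
    have hTle : ∑' v, |pLap μ ν p u v| ^ q * ν v ≤ c ^ q * (2 ^ (q + 1) * K ^ (-q) * S) := by
      calc ∑' v, |pLap μ ν p u v| ^ q * ν v
          ≤ ∑' v, c ^ q * (((1 / ν v) * ∑' w, μ v w * |u v - u w|) ^ q * ν v) :=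
            Summable.tsum_le_tsum hcmp hTsum (hPsum.mul_left _)
      _ = c ^ q * ∑' v, ((1 / ν v) * ∑' w, μ v w * |u v - u w|) ^ q * ν v := tsum_mul_left
      _ ≤ c ^ q * (2 ^ (q + 1) * K ^ (-q) * S) :=
            mul_le_mul_of_nonneg_left hPle (Real.rpow_nonneg hcnn _)
    rw [lqNorm, lqNorm]
    have hceq : c = 2 ^ (p - 2) * ε ^ (-((p - 2) / q)) * W ^ (p - 2) := by
      rw [hcdef, hMdef, show (2:ℝ) * (W * ε ^ (-(1 / q))) = 2 * W * ε ^ (-(1 / q)) by ring,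
        Real.mul_rpow (by positivity) (Real.rpow_nonneg hε.le _),
        Real.mul_rpow (by norm_num) hWnn, ← Real.rpow_mul hε.le]
      ring_nf
    calc (∑' v, |pLap μ ν p u v| ^ q * ν v) ^ (1 / q)
        ≤ (c ^ q * (2 ^ (q + 1) * K ^ (-q) * S)) ^ (1 / q) :=
          Real.rpow_le_rpow hTnn hTle (by positivity)
    _ = c * ((2 ^ (q + 1) * K ^ (-q)) ^ (1 / q) * W) := by
        rw [Real.mul_rpow (Real.rpow_nonneg hcnn _) (mul_nonneg hDnn hSnn),
          Real.mul_rpow hDnn hSnn, one_div, Real.rpow_rpow_inv hcnn hq0.ne', hWdef, one_div]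
    _ = 2 ^ (p - 2) * ε ^ (-((p - 2) / q)) * (2 ^ (q + 1) * K ^ (-q)) ^ (1 / q)
        * ((∑' v, |u v| ^ q * ν v) ^ (1 / q)) ^ (p - 1) := by
        rw [hceq, show ((∑' v, |u v| ^ q * ν v) ^ (1 / q) : ℝ) = W from rfl,
          rpow_split p hp hWnn]
        ring
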